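/- For 1 < p < ∞ with p ≠ 2, a spherical point on the unit sphere of l^2_p (a unit vector x such that x and (x_1|x_1|^{p-2}, x_2|x_2|^{p-2}) are linearly dependent) must equal one of ±e_1, ±e_2, or ±2^{-1/p}(e_1 ± e_2). -/

import Mathlib

open Finset

/-- The `p`-norm on `ℝ²`. -/
noncomputable def pnorm (p : ℝ) {n : ℕ} (x : Fin n → ℝ) : ℝ :=
  (∑ j, |x j| ^ p) ^ (1 / p)

lemma vec2_eta (x : Fin 2 → ℝ) : x = ![x 0, x 1] := by
  funext i; fin_cases i <;> simp

/-- For `1 < p < ∞`, `p ≠ 2`, a spherical point of the unit sphere of `l^2_p` (a unit vector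
`x` linearly dependent with `(x_1|x_1|^{p-2}, x_2|x_2|^{p-2})`) is one of
`±e_1, ±e_2, ±2^{-1/p}(e_1 ± e_2)`. -/
theorem stmt15 (p : ℝ) (hp : 1 < p) (hp2 : p ≠ 2) (x : Fin 2 → ℝ)
    (hx : pnorm p x = 1)
    (hdep : ∃ a b : ℝ, (a ≠ 0 ∨ b ≠ 0) ∧
      a • x + b • (fun i => x i * |x i| ^ (p - 2)) = 0) :
    x = ![1, 0] ∨ x = ![-1, 0] ∨ x = ![0, 1] ∨ x = ![0, -1] ∨
      x = ![(2 : ℝ) ^ (-(1 / p)), (2 : ℝ) ^ (-(1 / p))] ∨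
      x = ![(2 : ℝ) ^ (-(1 / p)), -((2 : ℝ) ^ (-(1 / p)))] ∨
      x = ![-((2 : ℝ) ^ (-(1 / p))), (2 : ℝ) ^ (-(1 / p))] ∨
      x = ![-((2 : ℝ) ^ (-(1 / p))), -((2 : ℝ) ^ (-(1 / p)))] := by
  have hp0 : (0 : ℝ) < p := lt_trans one_pos hp
  have hpne : p ≠ 0 := ne_of_gt hp0
  -- sum = 1
  have hsum : |x 0| ^ p + |x 1| ^ p = 1 := by
    have hnn : (0 : ℝ) ≤ ∑ j, |x j| ^ p := by
      apply Finset.sum_nonneg; intro j _; positivity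
    have h1 := congrArg (· ^ p) hx
    unfold pnorm at h1
    rw [← Real.rpow_mul hnn, one_div, inv_mul_cancel₀ hpne, Real.rpow_one,
      Real.one_rpow] at h1
    rw [← Fin.sum_univ_two (fun j => |x j| ^ p), h1]
  have habs : ∀ t : ℝ, |t| ^ p = 1 → t = 1 ∨ t = -1 := by
    intro t ht
    have h1 : |t| = 1 :=
      Real.rpow_left_injOn (x := p) hpne (abs_nonneg t)
        (by norm_num : (1:ℝ) ∈ {y : ℝ | 0 ≤ y}) (by simp [ht])
    rcases abs_eq (le_of_lt one_pos) |>.mp h1 with h | h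
    · exact Or.inl h
    · exact Or.inr h
  by_cases h0 : x 0 = 0
  · have h1 : |x 1| ^ p = 1 := by
      rw [h0] at hsum; simpa [Real.zero_rpow hpne] using hsum
    rcases habs _ h1 with h | h
    · right; right; left; rw [vec2_eta x, h0, h]
    · right; right; right; left; rw [vec2_eta x, h0, h]
  by_cases h1 : x 1 = 0
  · have h0' : |x 0| ^ p = 1 := by
      rw [h1] at hsum; simpa [Real.zero_rpow hpne] using hsum
    rcases habs _ h0' with h | h
    · left; rw [vec2_eta x, h1, h]
    · right; left; rw [vec2_eta x, h1, h]
  -- both nonzero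
  obtain ⟨a, b, hab, heq⟩ := hdep
  have e0 := congrFun heq 0
  have e1 := congrFun heq 1
  simp only [Pi.add_apply, Pi.smul_apply, smul_eq_mul, Pi.zero_apply] at e0 e1
  have hb : b ≠ 0 := by
    intro hb0
    rcases hab with ha | hb'
    · rw [hb0, zero_mul, add_zero, mul_eq_zero] at e0
      rcases e0 with h | h
      · exact ha h
      · exact h0 h
    · exact hb' hb0
  have key : ∀ i : Fin 2, x i ≠ 0 → a * x i + b * (x i * |x i| ^ (p - 2)) = 0 →
      |x i| ^ (p - 2) = -a / b := by
    intro i hi he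
    have : x i * (a + b * |x i| ^ (p - 2)) = 0 := by
      rw [show x i * (a + b * |x i| ^ (p - 2))
        = a * x i + b * (x i * |x i| ^ (p - 2)) from by ring, he]
    rcases mul_eq_zero.mp this with h | h
    · exact absurd h hi
    · field_simp
      linarith
  have k0 := key 0 h0 e0
  have k1 := key 1 h1 e1
  have hpe2 : p - 2 ≠ 0 := sub_ne_zero.mpr hp2
  have habs01 : |x 0| = |x 1| := by
    apply Real.rpow_left_injOn (x := p - 2) hpe2 (abs_nonneg (x 0)) (abs_nonneg (x 1))
    simp only [Set.mem_setOf_eq]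
    rw [k0, k1]
  have hval : |x 0| = (2 : ℝ) ^ (-(1 / p)) := by
    have h2 : |x 0| ^ p = 1 / 2 := by
      rw [← habs01] at hsum; linarith
    have hpow : ((2 : ℝ) ^ (-(1 / p))) ^ p = 1 / 2 := by
      rw [← Real.rpow_mul (by norm_num : (0:ℝ) ≤ 2),
        show (-(1 / p)) * p = -1 by field_simp]
      norm_num [Real.rpow_neg_one]
    refine Real.rpow_left_injOn (x := p) hpne (abs_nonneg (x 0))
      (by simp only [Set.mem_setOf_eq]; positivity) ?_
    simp only [Set.mem_setOf_eq]
    rw [h2, hpow]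
  have hval1 : |x 1| = (2 : ℝ) ^ (-(1 / p)) := habs01 ▸ hval
  rcases abs_eq (by positivity) |>.mp hval with ha0 | ha0 <;>
    rcases abs_eq (by positivity) |>.mp hval1 with ha1 | ha1
  · right; right; right; right; left; rw [vec2_eta x, ha0, ha1]
  · right; right; right; right; right; left; rw [vec2_eta x, ha0, ha1]
  · right; right; right; right; right; right; left; rw [vec2_eta x, ha0, ha1]
  · right; right; right; right; right; right; right; rw [vec2_eta x, ha0, ha1]
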